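/- arXiv:1607.03788 — 2 statements merged into one kernel-verified Lean document; each statement's English description precedes it below -/
import Mathlib

section
/- Let (Z_i)_{i≥0} be i.i.d. unit Fréchet random variables and let (a_n) be positive reals with n·P(Z_1 > a_n) → 1 as n → ∞. There exists ε > 0 with 1 − e^{−1/ε} > 4/ε², and for any such ε, liminf_{n→∞} P( max_{1≤i≤n−1} Z_i > ε a_n, and there do NOT exist i, j ∈ {0, 1, …, n} with i ≠ j, Z_i > ε a_n and Z_j > ε a_n/4 ) ≥ (1 − e^{−1/ε}) − 4/ε² > 0. -/
open MeasureTheory ProbabilityTheory Filter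

private lemma aux_slope (a : ℕ → ℝ) (ha : ∀ n, 0 < a n)
    (h0 : Tendsto (fun n : ℕ => 1 / a n) atTop (nhds 0)) (c : ℝ) (hc : 0 < c) :
    Tendsto (fun n : ℕ => a n * (1 - Real.exp (-c / a n))) atTop (nhds c) := by
  have hd := hasDerivAt_iff_tendsto_slope.mp (Real.hasDerivAt_exp 0)
  rw [Real.exp_zero] at hd
  have hmem : Tendsto (fun n : ℕ => -c / a n) atTop (nhdsWithin 0 {(0:ℝ)}ᶜ) := by
    rw [tendsto_nhdsWithin_iff]
    constructor
    · have : Tendsto (fun n : ℕ => (-c) * (1 / a n)) atTop (nhds ((-c) * 0)) :=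
        (h0.const_mul (-c))
      rw [mul_zero] at this
      exact this.congr fun n => by ring
    · exact Eventually.of_forall fun n =>
        (div_neg_of_neg_of_pos (by linarith) (ha n)).ne
  have hcomp := hd.comp hmem
  have := hcomp.const_mul c
  rw [mul_one] at this
  apply this.congr
  intro n
  have han := (ha n).ne'
  have hc' := hc.ne'
  simp only [Function.comp_def, slope_def_field]
  have hD : (-c / a n - 0) ≠ 0 := by
    rw [sub_zero]; exact div_ne_zero (neg_ne_zero.mpr hc') han
  rw [Real.exp_zero, mul_comm, div_mul_eq_mul_div, div_eq_iff hD]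
  field_simp
  ring

private lemma aux_asym (a : ℕ → ℝ) (ha : ∀ n, 0 < a n)
    (h : Tendsto (fun n : ℕ => (n:ℝ) * (1 - Real.exp (-1 / a n))) atTop (nhds 1)) :
    Tendsto (fun n : ℕ => (n:ℝ) / a n) atTop (nhds 1) ∧
    Tendsto (fun n : ℕ => 1 / a n) atTop (nhds 0) := by
  set e : ℕ → ℝ := fun n => 1 - Real.exp (-1 / a n) with he
  have hepos : ∀ n, 0 < e n := by
    intro n
    have : Real.exp (-1 / a n) < 1 := by
      apply Real.exp_lt_one_iff.mpr
      exact div_neg_of_neg_of_pos (by norm_num) (ha n)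
    simp only [he]; linarith
  have he0 : Tendsto e atTop (nhds 0) := by
    have := h.mul tendsto_one_div_atTop_nhds_zero_nat
    rw [mul_zero] at this
    apply this.congr'
    filter_upwards [eventually_ge_atTop 1] with n hn
    have : (n:ℝ) ≠ 0 := Nat.cast_ne_zero.mpr (by omega)
    field_simp
    simp only [he, neg_div]
  have hexp1 : Tendsto (fun n => Real.exp (-1 / a n)) atTop (nhds 1) := by
    have : Tendsto (fun n => 1 - e n) atTop (nhds (1 - 0)) := tendsto_const_nhds.sub he0
    simpa [he] using this
  have hinv0 : Tendsto (fun n : ℕ => -1 / a n) atTop (nhds 0) := by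
    have hlog := (Real.continuousAt_log one_ne_zero).tendsto.comp hexp1
    simp only [Function.comp_def, Real.log_exp, Real.log_one] at hlog
    exact hlog
  have hone : Tendsto (fun n : ℕ => 1 / a n) atTop (nhds 0) := by
    have := hinv0.neg
    rw [neg_zero] at this
    apply this.congr
    intro n; rw [neg_div, neg_neg]
  have hslope : Tendsto (fun n : ℕ => a n * e n) atTop (nhds 1) :=
    aux_slope a ha hone 1 one_pos
  have : Tendsto (fun n : ℕ => ((n:ℝ) * e n) / (a n * e n)) atTop (nhds (1/1)) :=
    h.div hslope one_ne_zero
  rw [div_one] at this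
  refine ⟨this.congr fun n => ?_, hone⟩
  rw [mul_div_mul_right _ _ (hepos n).ne']

/-- Let `(Z_i)_{i≥0}` be i.i.d. unit Fréchet random variables
(`P(Z ≤ x) = exp(−1/x)` for `x > 0` and `= 0` for `x ≤ 0`) and let `(a_n)` be positive
reals with `n·P(Z_1 > a_n) → 1`. There exists `ε > 0` with `1 − e^{−1/ε} > 4/ε²`, and for
any such `ε`,
`liminf_{n→∞} P( max_{1≤i≤n−1} Z_i > ε a_n and there are no i ≠ j in {0,…,n} with
Z_i > ε a_n and Z_j > ε a_n/4 ) ≥ (1 − e^{−1/ε}) − 4/ε² > 0`. -/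
theorem liminf_prob_A_minus_B_pos {Ω : Type*} [MeasureSpace Ω]
    [IsProbabilityMeasure (ℙ : Measure Ω)]
    (Z : ℕ → Ω → ℝ) (hmeas : ∀ i, Measurable (Z i))
    (hindep : iIndepFun Z ℙ)
    (hcdf : ∀ i : ℕ, ∀ x : ℝ,
      ℙ {ω | Z i ω ≤ x} = if 0 < x then ENNReal.ofReal (Real.exp (-1 / x)) else 0)
    (a : ℕ → ℝ) (ha : ∀ n, 0 < a n)
    (hna : Tendsto (fun n : ℕ => (n : ℝ) * (ℙ {ω | a n < Z 1 ω}).toReal) atTop (nhds 1)) :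
    (∃ ε : ℝ, 0 < ε ∧ 4 / ε ^ 2 < 1 - Real.exp (-1 / ε)) ∧
      ∀ ε : ℝ, 0 < ε → 4 / ε ^ 2 < 1 - Real.exp (-1 / ε) →
        (1 - Real.exp (-1 / ε)) - 4 / ε ^ 2 ≤
            Filter.liminf (fun n : ℕ =>
              (ℙ {ω | (∃ i ∈ Finset.Icc 1 (n - 1), ε * a n < Z i ω) ∧
                ¬ ∃ i ∈ Finset.range (n + 1), ∃ j ∈ Finset.range (n + 1),
                  i ≠ j ∧ ε * a n < Z i ω ∧ ε * a n / 4 < Z j ω}).toReal) atTop ∧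
          0 < (1 - Real.exp (-1 / ε)) - 4 / ε ^ 2 := by
  -- basic tail facts
  have hle : ∀ (i : ℕ) (x : ℝ), 0 < x →
      Real.exp (-1 / x) ≤ 1 := fun i x hx =>
    Real.exp_le_one_iff.mpr (le_of_lt (div_neg_of_neg_of_pos (by norm_num) hx))
  have htail : ∀ (i : ℕ) (x : ℝ), 0 < x →
      ℙ {ω | x < Z i ω} = 1 - ENNReal.ofReal (Real.exp (-1 / x)) := by
    intro i x hx
    have hset : {ω | x < Z i ω} = {ω | Z i ω ≤ x}ᶜ := by ext ω; simp [not_le]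
    have hms : MeasurableSet {ω | Z i ω ≤ x} := (hmeas i) measurableSet_Iic
    rw [hset, measure_compl hms (measure_ne_top _ _), hcdf i x, if_pos hx, measure_univ]
  have htailR : ∀ (i : ℕ) (x : ℝ), 0 < x →
      (ℙ {ω | x < Z i ω}).toReal = 1 - Real.exp (-1 / x) := by
    intro i x hx
    rw [htail i x hx, ENNReal.toReal_sub_of_le (by simpa using hle i x hx) (by simp),
      ENNReal.toReal_ofReal (Real.exp_nonneg _)]
    simp
  -- asymptotics
  have hna' : Tendsto (fun n : ℕ => (n:ℝ) * (1 - Real.exp (-1 / a n))) atTop (nhds 1) := by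
    apply hna.congr
    intro n
    rw [htailR 1 (a n) (ha n)]
  obtain ⟨hdiv, h0⟩ := aux_asym a ha hna'
  -- existence of ε
  have heps : (4:ℝ) / 10 ^ 2 < 1 - Real.exp (-1 / 10) := by
    have h1 : (1:ℝ) + 1/10 < Real.exp (1/10) := by
      have := Real.add_one_lt_exp (show (1:ℝ)/10 ≠ 0 by norm_num); linarith
    have h2 : Real.exp (-1/10) = (Real.exp (1/10))⁻¹ := by
      rw [← Real.exp_neg]; norm_num
    have h3 : Real.exp (-1/10) < (1 + 1/10 : ℝ)⁻¹ := by
      rw [h2]; exact inv_strictAnti₀ (by norm_num) h1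
    have h4 : ((1:ℝ) + 1/10)⁻¹ = 10/11 := by norm_num
    rw [h4] at h3; norm_num; linarith
  refine ⟨⟨10, by norm_num, heps⟩, ?_⟩
  intro ε hε hε2
  refine ⟨?_, by linarith⟩
  set L : ℝ := (1 - Real.exp (-1 / ε)) - 4 / ε ^ 2 with hL
  -- notation
  set t : ℕ → ℝ := fun n => ε * a n with ht
  have htpos : ∀ n, 0 < t n := fun n => mul_pos hε (ha n)
  have hspos : ∀ n, 0 < t n / 4 := fun n => by have := htpos n; linarith
  -- measure of A_n
  set fA : ℕ → ℝ := fun n => 1 - Real.exp ((↑(n-1):ℝ) * (-1 / (ε * a n))) with hfA_def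
  have hA : ∀ n : ℕ,
      (ℙ {ω | ∃ i ∈ Finset.Icc 1 (n - 1), ε * a n < Z i ω}).toReal = fA n := by
    intro n
    have hset : {ω | ∃ i ∈ Finset.Icc 1 (n - 1), ε * a n < Z i ω}
        = (⋂ i ∈ Finset.Icc 1 (n-1), {ω | Z i ω ≤ ε * a n})ᶜ := by
      ext ω; simp [not_le]
    have hmeasInt : MeasurableSet (⋂ i ∈ Finset.Icc 1 (n-1), {ω | Z i ω ≤ ε * a n}) :=
      MeasurableSet.biInter (Set.to_countable _)
        (fun i _ => (hmeas i) measurableSet_Iic)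
    have hprod : ℙ (⋂ i ∈ Finset.Icc 1 (n-1), {ω | Z i ω ≤ ε * a n})
        = (ENNReal.ofReal (Real.exp (-1 / (ε * a n)))) ^ (n - 1) := by
      rw [hindep.meas_biInter (S := Finset.Icc 1 (n-1))
        (s := fun i => {ω | Z i ω ≤ ε * a n})
        (fun i _ => ⟨Set.Iic (ε * a n), measurableSet_Iic, rfl⟩)]
      have : ∀ i ∈ Finset.Icc 1 (n-1), ℙ {ω | Z i ω ≤ ε * a n}
          = ENNReal.ofReal (Real.exp (-1 / (ε * a n))) := by
        intro i _
        rw [hcdf i _, if_pos (htpos n)]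
      rw [Finset.prod_congr rfl this, Finset.prod_const, Nat.card_Icc]
      norm_num
    rw [hset, measure_compl hmeasInt (measure_ne_top _ _), measure_univ, hprod,
      ← ENNReal.ofReal_pow (Real.exp_nonneg _), ← Real.exp_nat_mul]
    have harg : ((n-1 : ℕ):ℝ) * (-1 / (ε * a n)) ≤ 0 := by
      apply mul_nonpos_of_nonneg_of_nonpos (Nat.cast_nonneg _)
      exact le_of_lt (div_neg_of_neg_of_pos (by norm_num) (htpos n))
    rw [ENNReal.toReal_sub_of_le (by simpa using Real.exp_le_one_iff.mpr harg) (by simp),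
      ENNReal.toReal_ofReal (Real.exp_nonneg _)]
    simp [hfA_def]
  -- limit of fA
  have hfA_lim : Tendsto fA atTop (nhds (1 - Real.exp (-1 / ε))) := by
    have h1 : Tendsto (fun n : ℕ => (↑(n-1):ℝ) / a n) atTop (nhds 1) := by
      have := hdiv.sub h0
      rw [sub_zero] at this
      apply this.congr'
      filter_upwards [eventually_ge_atTop 1] with n hn
      rw [Nat.cast_sub hn]
      push_cast
      ring
    have h2 : Tendsto (fun n : ℕ => (↑(n-1):ℝ) * (-1 / (ε * a n))) atTop
        (nhds (-1/ε)) := by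
      have := h1.const_mul (-1/ε)
      rw [mul_one] at this
      apply this.congr
      intro n
      have h1' := (ha n).ne'
      have h2' := hε.ne'
      field_simp
    have := (Real.continuous_exp.tendsto _).comp h2
    have h3 : Tendsto (fun n : ℕ => Real.exp ((↑(n-1):ℝ) * (-1 / (ε * a n)))) atTop
        (nhds (Real.exp (-1/ε))) := this
    exact (tendsto_const_nhds : Tendsto (fun _ : ℕ => (1:ℝ)) atTop (nhds 1)).sub h3
  -- bound on B_n
  set p : ℕ → ℝ := fun n => 1 - Real.exp (-1 / (ε * a n)) with hp_def
  set q : ℕ → ℝ := fun n => 1 - Real.exp (-1 / (ε * a n / 4)) with hq_def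
  set c : ℕ → ℝ := fun n => ((n:ℝ)+1)^2 * (p n * q n) with hc_def
  have hp01 : ∀ n, 0 ≤ p n ∧ p n ≤ 1 := by
    intro n
    constructor
    · simp only [hp_def, sub_nonneg]; exact hle 0 _ (htpos n)
    · simp only [hp_def]; have := Real.exp_nonneg (-1 / (ε * a n)); linarith
  have hq01 : ∀ n, 0 ≤ q n ∧ q n ≤ 1 := by
    intro n
    constructor
    · simp only [hq_def, sub_nonneg]; exact hle 0 _ (hspos n)
    · simp only [hq_def]; have := Real.exp_nonneg (-1 / (ε * a n / 4)); linarith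
  have hc_nonneg : ∀ n, 0 ≤ c n := fun n =>
    mul_nonneg (by positivity) (mul_nonneg (hp01 n).1 (hq01 n).1)
  have hB : ∀ n : ℕ,
      (ℙ {ω | ∃ i ∈ Finset.range (n + 1), ∃ j ∈ Finset.range (n + 1),
        i ≠ j ∧ ε * a n < Z i ω ∧ ε * a n / 4 < Z j ω}).toReal ≤ c n := by
    intro n
    apply ENNReal.toReal_le_of_le_ofReal (hc_nonneg n)
    have hset : {ω | ∃ i ∈ Finset.range (n + 1), ∃ j ∈ Finset.range (n + 1),
        i ≠ j ∧ ε * a n < Z i ω ∧ ε * a n / 4 < Z j ω}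
        = ⋃ i ∈ Finset.range (n+1), ⋃ j ∈ Finset.range (n+1),
          {ω | i ≠ j ∧ ε * a n < Z i ω ∧ ε * a n / 4 < Z j ω} := by
      ext ω
      simp only [Set.mem_setOf_eq, Set.mem_iUnion, Finset.mem_range]
      constructor
      · rintro ⟨i, hi, j, hj, hij, h1, h2⟩
        exact ⟨i, hi, j, hj, hij, h1, h2⟩
      · rintro ⟨i, hi, j, hj, hij, h1, h2⟩
        exact ⟨i, hi, j, hj, hij, h1, h2⟩
    rw [hset]
    have hterm : ∀ i ∈ Finset.range (n+1), ∀ j ∈ Finset.range (n+1),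
        ℙ {ω | i ≠ j ∧ ε * a n < Z i ω ∧ ε * a n / 4 < Z j ω}
          ≤ ENNReal.ofReal (p n) * ENNReal.ofReal (q n) := by
      intro i _ j _
      by_cases hij : i = j
      · simp [hij]
      · have hDeq : {ω | i ≠ j ∧ ε * a n < Z i ω ∧ ε * a n / 4 < Z j ω}
            = (Z i)⁻¹' (Set.Ioi (ε * a n)) ∩ (Z j)⁻¹' (Set.Ioi (ε * a n / 4)) := by
          ext ω; simp [hij]
        rw [hDeq, (hindep.indepFun hij).measure_inter_preimage_eq_mul _ _
          measurableSet_Ioi measurableSet_Ioi]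
        have e1 : ℙ ((Z i)⁻¹' (Set.Ioi (ε * a n))) = ENNReal.ofReal (p n) := by
          have := htail i (ε * a n) (htpos n)
          rw [show (Z i)⁻¹' (Set.Ioi (ε * a n)) = {ω | ε * a n < Z i ω} from rfl, this,
            hp_def]
          rw [ENNReal.ofReal_sub _ (Real.exp_nonneg _), ENNReal.ofReal_one]
        have e2 : ℙ ((Z j)⁻¹' (Set.Ioi (ε * a n / 4))) = ENNReal.ofReal (q n) := by
          have := htail j (ε * a n / 4) (hspos n)
          rw [show (Z j)⁻¹' (Set.Ioi (ε * a n / 4)) = {ω | ε * a n / 4 < Z j ω} from rfl,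
            this, hq_def]
          rw [ENNReal.ofReal_sub _ (Real.exp_nonneg _), ENNReal.ofReal_one]
        rw [e1, e2]
    calc ℙ (⋃ i ∈ Finset.range (n+1), ⋃ j ∈ Finset.range (n+1),
          {ω | i ≠ j ∧ ε * a n < Z i ω ∧ ε * a n / 4 < Z j ω})
        ≤ ∑ i ∈ Finset.range (n+1), ℙ (⋃ j ∈ Finset.range (n+1),
            {ω | i ≠ j ∧ ε * a n < Z i ω ∧ ε * a n / 4 < Z j ω}) :=
          measure_biUnion_finset_le _ _
      _ ≤ ∑ i ∈ Finset.range (n+1), ∑ j ∈ Finset.range (n+1),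
            ℙ {ω | i ≠ j ∧ ε * a n < Z i ω ∧ ε * a n / 4 < Z j ω} :=
          Finset.sum_le_sum fun i _ => measure_biUnion_finset_le _ _
      _ ≤ ∑ i ∈ Finset.range (n+1), ∑ j ∈ Finset.range (n+1),
            ENNReal.ofReal (p n) * ENNReal.ofReal (q n) :=
          Finset.sum_le_sum fun i hi => Finset.sum_le_sum fun j hj => hterm i hi j hj
      _ = ENNReal.ofReal (c n) := by
          rw [Finset.sum_const, Finset.sum_const, Finset.card_range, smul_smul,
            nsmul_eq_mul]
          have hcast : (((n+1)*(n+1) : ℕ) : ENNReal)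
              = ENNReal.ofReal (((n:ℝ)+1)^2) := by
            have : (((n:ℝ))+1)^2 = (((n+1)*(n+1) : ℕ) : ℝ) := by push_cast; ring
            rw [this, ENNReal.ofReal_natCast]
          rw [hcast, ← ENNReal.ofReal_mul (hp01 n).1,
            ← ENNReal.ofReal_mul (by positivity)]
  -- limit of c
  have hc_lim : Tendsto c atTop (nhds (4 / ε^2)) := by
    have hn1 : Tendsto (fun n : ℕ => ((n:ℝ)+1) / a n) atTop (nhds 1) := by
      have := hdiv.add h0
      rw [add_zero] at this
      apply this.congr
      intro n
      rw [← add_div]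
    have hsp : Tendsto (fun n : ℕ => a n * p n) atTop (nhds (1/ε)) := by
      have := aux_slope a ha h0 (1/ε) (by positivity)
      apply this.congr
      intro n
      have harg : -(1/ε) / a n = -1 / (ε * a n) := by
        rw [neg_div, neg_div, div_div]
      rw [harg]
    have hsq : Tendsto (fun n : ℕ => a n * q n) atTop (nhds (4/ε)) := by
      have := aux_slope a ha h0 (4/ε) (by positivity)
      apply this.congr
      intro n
      have harg : -(4/ε) / a n = -1 / (ε * a n / 4) := by
        rw [neg_div, div_div, neg_div, one_div_div]
      rw [harg]
    have hprod := (hn1.mul hsp).mul (hn1.mul hsq)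
    have hval : (1 * (1/ε)) * (1 * (4/ε)) = 4 / ε^2 := by
      field_simp
    rw [hval] at hprod
    apply hprod.congr
    intro n
    have han := (ha n).ne'
    field_simp
    ring
  -- combine
  have hstep : ∀ n : ℕ, fA n - c n ≤
      (ℙ {ω | (∃ i ∈ Finset.Icc 1 (n - 1), ε * a n < Z i ω) ∧
        ¬ ∃ i ∈ Finset.range (n + 1), ∃ j ∈ Finset.range (n + 1),
          i ≠ j ∧ ε * a n < Z i ω ∧ ε * a n / 4 < Z j ω}).toReal := by
    intro n
    classical
    set A := {ω | ∃ i ∈ Finset.Icc 1 (n - 1), ε * a n < Z i ω} with hAs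
    set Bs := {ω | ∃ i ∈ Finset.range (n + 1), ∃ j ∈ Finset.range (n + 1),
      i ≠ j ∧ ε * a n < Z i ω ∧ ε * a n / 4 < Z j ω} with hBs
    have hsub : A ⊆ {ω | ω ∈ A ∧ ω ∉ Bs} ∪ Bs := by
      intro ω hω
      by_cases hB : ω ∈ Bs
      · exact Or.inr hB
      · exact Or.inl ⟨hω, hB⟩
    have hmeasle : ℙ A ≤ ℙ {ω | ω ∈ A ∧ ω ∉ Bs} + ℙ Bs :=
      (measure_mono hsub).trans (measure_union_le _ _)
    have hEeq : {ω | ω ∈ A ∧ ω ∉ Bs} = {ω | (∃ i ∈ Finset.Icc 1 (n - 1), ε * a n < Z i ω) ∧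
        ¬ ∃ i ∈ Finset.range (n + 1), ∃ j ∈ Finset.range (n + 1),
          i ≠ j ∧ ε * a n < Z i ω ∧ ε * a n / 4 < Z j ω} := rfl
    have htoReal : (ℙ A).toReal ≤ (ℙ {ω | ω ∈ A ∧ ω ∉ Bs}).toReal + (ℙ Bs).toReal := by
      have h1 := ENNReal.toReal_mono
        (ENNReal.add_ne_top.mpr ⟨measure_ne_top _ _, measure_ne_top _ _⟩) hmeasle
      rwa [ENNReal.toReal_add (measure_ne_top _ _) (measure_ne_top _ _)] at h1
    rw [hEeq] at htoReal
    have hAeq : (ℙ A).toReal = fA n := hA n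
    have hBle : (ℙ Bs).toReal ≤ c n := hB n
    rw [hAeq] at htoReal
    linarith
  have hten : Tendsto (fun n => fA n - c n) atTop (nhds L) := by
    have := hfA_lim.sub hc_lim
    exact this
  calc L = liminf (fun n => fA n - c n) atTop := (hten.liminf_eq).symm
    _ ≤ _ :=
        liminf_le_liminf (Eventually.of_forall hstep) hten.isBoundedUnder_ge
          (Filter.IsBoundedUnder.isCoboundedUnder_ge
            (Filter.isBoundedUnder_of ⟨1, fun n => by
              simpa using ENNReal.toReal_mono ENNReal.one_ne_top prob_le_one⟩))
end

section
/- Let (Z_i)_{i≥0} be i.i.d. unit Fréchet random variables and let (a_n) be positive reals with n·P(Z_1 > a_n) → 1 as n → ∞. For n ≥ 1 define V_n : [0,1] → ℝ by V_n(t) = ⋁_{j=1}^{⌊nt⌋} Z_j/a_n − ⋁_{j=1}^{⌊nt⌋} Z_{j−1}/a_n (with the maximum over an empty index set equal to 0). Then there exist ε > 0 and c > 0 such that for every δ > 0, limsup_{n→∞} P( ω_δ(V_n) > ε ) ≥ c; in particular lim_{δ↓0} limsup_{n→∞} P( ω_δ(V_n) > ε ) > 0. -/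
open MeasureTheory ProbabilityTheory Filter

/-- For real numbers `x₁, x₂, x₃`, `M(x₁,x₂,x₃) = 0` if `x₂` lies in the closed interval
with endpoints `x₁` and `x₃`, and `M(x₁,x₂,x₃) = min(|x₂−x₁|, |x₃−x₂|)` otherwise. -/
noncomputable def M1Dist (x₁ x₂ x₃ : ℝ) : ℝ :=
  haveI := Classical.propDecidable (x₂ ∈ Set.uIcc x₁ x₃)
  if x₂ ∈ Set.uIcc x₁ x₃ then 0 else min |x₂ - x₁| |x₃ - x₂|

/-- The `M₁` oscillation `ω_δ(x) = sup{ M(x(t₁), x(t), x(t₂)) :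
0 ≤ t₁ ≤ t ≤ t₂ ≤ 1, t₂ − t₁ ≤ δ }` of a function `x` on `[0,1]`. -/
noncomputable def M1Osc (x : ℝ → ℝ) (δ : ℝ) : ℝ :=
  sSup {v : ℝ | ∃ t₁ t t₂ : ℝ, 0 ≤ t₁ ∧ t₁ ≤ t ∧ t ≤ t₂ ∧ t₂ ≤ 1 ∧ t₂ - t₁ ≤ δ ∧
    v = M1Dist (x t₁) (x t) (x t₂)}

lemma M1Dist_le_abs (x₁ x₂ x₃ : ℝ) : M1Dist x₁ x₂ x₃ ≤ |x₂ - x₁| := by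
  unfold M1Dist
  split
  · positivity
  · exact min_le_left _ _

lemma floor_mul_div (n k : ℕ) (hn : 0 < n) : ⌊(n : ℝ) * ((k : ℝ) / n)⌋₊ = k := by
  have hn' : (n : ℝ) ≠ 0 := Nat.cast_ne_zero.mpr hn.ne'
  rw [mul_div_cancel₀ _ hn', Nat.floor_natCast]

lemma osc_lower {n j : ℕ} (hj1 : 1 ≤ j) (hjn : j + 1 ≤ n) {a : ℝ} (hapos : 0 < a)
    {W : ℕ → ℝ} (hbig : 5 * a < W j) (hsmall : ∀ i, i ≤ n → i ≠ j → W i ≤ 2 * a)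
    {δ : ℝ} (hδ : 2 / n ≤ δ) :
    1 < M1Osc (fun t : ℝ =>
      ((Finset.Icc 1 ⌊(n : ℝ) * t⌋₊).fold max 0 (fun i => W i / a)) -
        ((Finset.Icc 1 ⌊(n : ℝ) * t⌋₊).fold max 0 (fun i => W (i - 1) / a))) δ := by
  have hn : 0 < n := by omega
  set g : ℕ → ℝ := fun k => (Finset.Icc 1 k).fold max 0 (fun i => W i / a) with hg
  set h : ℕ → ℝ := fun k => (Finset.Icc 1 k).fold max 0 (fun i => W (i - 1) / a) with hh
  set x : ℝ → ℝ := fun t => g ⌊(n : ℝ) * t⌋₊ - h ⌊(n : ℝ) * t⌋₊ with hx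
  have hg0 : ∀ k, 0 ≤ g k := fun k => (Finset.le_fold_max _).mpr (Or.inl le_rfl)
  have hh0 : ∀ k, 0 ≤ h k := fun k => (Finset.le_fold_max _).mpr (Or.inl le_rfl)
  -- value bounds
  have hWj0 : 0 < W j := lt_trans (by positivity) hbig
  have hdiv : ∀ {c : ℝ} (i : ℕ), i ≤ n → i ≠ j → (0 ≤ c) → W i ≤ c * a → W i / a ≤ c := by
    intro c i hi hij hc hW
    rw [div_le_iff₀ hapos]; exact hW
  have hgle : ∀ k, k ≤ n → k < j → g k ≤ 2 := by
    intro k hk hkj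
    refine (Finset.fold_max_le _).mpr ⟨by norm_num, ?_⟩
    intro i hi
    simp only [Finset.mem_Icc] at hi
    rw [div_le_iff₀ hapos]
    calc W i ≤ 2 * a := hsmall i (le_trans hi.2 hk) (by omega)
    _ = 2 * a := rfl
  have hhle : ∀ k, k ≤ n + 1 → k ≤ j → h k ≤ 2 := by
    intro k hk hkj
    refine (Finset.fold_max_le _).mpr ⟨by norm_num, ?_⟩
    intro i hi
    simp only [Finset.mem_Icc] at hi
    rw [div_le_iff₀ hapos]
    exact hsmall (i - 1) (by omega) (by omega)
  -- x at t = j/n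
  have hx2' : 5 < g j := by
    have : W j / a ≤ g j := (Finset.le_fold_max _).mpr (Or.inr ⟨j, Finset.mem_Icc.mpr ⟨hj1, le_rfl⟩, le_rfl⟩)
    have h5 : (5 : ℝ) < W j / a := by rw [lt_div_iff₀ hapos]; linarith
    linarith
  have hgj1 : g (j + 1) = W j / a := by
    apply le_antisymm
    · refine (Finset.fold_max_le _).mpr ⟨by positivity, ?_⟩
      intro i hi
      simp only [Finset.mem_Icc] at hi
      rcases eq_or_ne i j with rfl | hij
      · exact le_rfl
      · have := hsmall i (by omega) hij
        gcongr
        linarith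
    · exact (Finset.le_fold_max _).mpr (Or.inr ⟨j, Finset.mem_Icc.mpr ⟨hj1, by omega⟩, le_rfl⟩)
  have hhj1 : h (j + 1) = W j / a := by
    apply le_antisymm
    · refine (Finset.fold_max_le _).mpr ⟨by positivity, ?_⟩
      intro i hi
      simp only [Finset.mem_Icc] at hi
      rcases eq_or_ne (i - 1) j with he | hij
      · rw [he]
      · have := hsmall (i - 1) (by omega) hij
        gcongr
        linarith
    · refine (Finset.le_fold_max _).mpr (Or.inr ⟨j + 1, Finset.mem_Icc.mpr ⟨by omega, le_rfl⟩, ?_⟩)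
      simp
  -- the three time points
  set t₁ : ℝ := ((j - 1 : ℕ) : ℝ) / n with ht₁
  set t : ℝ := ((j : ℕ) : ℝ) / n with ht
  set t₂ : ℝ := ((j + 1 : ℕ) : ℝ) / n with ht₂
  have hf1 : ⌊(n : ℝ) * t₁⌋₊ = j - 1 := floor_mul_div n (j - 1) hn
  have hf2 : ⌊(n : ℝ) * t⌋₊ = j := floor_mul_div n j hn
  have hf3 : ⌊(n : ℝ) * t₂⌋₊ = j + 1 := floor_mul_div n (j + 1) hn
  have hx1 : x t₁ ≤ 2 := by
    rw [hx]; simp only [hf1]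
    have := hgle (j - 1) (by omega) (by omega)
    have := hh0 (j - 1)
    linarith
  have hx2 : 3 < x t := by
    rw [hx]; simp only [hf2]
    have := hhle j (by omega) le_rfl
    linarith
  have hx3 : x t₂ = 0 := by
    rw [hx]; simp only [hf3, hgj1, hhj1, sub_self]
  -- the M1Dist value
  have hne : x t ∉ Set.uIcc (x t₁) (x t₂) := by
    rw [Set.mem_uIcc]
    push_neg
    constructor
    · intro _; linarith
    · intro h'; linarith [hx3 ▸ h']
  have hMval : 1 < M1Dist (x t₁) (x t) (x t₂) := by
    unfold M1Dist
    rw [if_neg hne]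
    rw [lt_min_iff]
    constructor
    · rw [abs_of_pos (by linarith)]; linarith
    · rw [abs_of_neg (by linarith)]; linarith
  -- boundedness
  set B : ℝ := (Finset.range (n + 1)).fold max 0 (fun k => |g k - h k|) with hB
  have hbd : ∀ s : ℝ, 0 ≤ s → s ≤ 1 → |x s| ≤ B := by
    intro s hs0 hs1
    have hk : ⌊(n : ℝ) * s⌋₊ ≤ n := by
      have : (n : ℝ) * s ≤ (n : ℝ) := by nlinarith
      calc ⌊(n : ℝ) * s⌋₊ ≤ ⌊(n : ℝ)⌋₊ := Nat.floor_le_floor this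
      _ = n := Nat.floor_natCast n
    exact (Finset.le_fold_max _).mpr (Or.inr ⟨⌊(n : ℝ) * s⌋₊, Finset.mem_range.mpr (by omega), le_rfl⟩)
  have hBdd : BddAbove {v : ℝ | ∃ t₁ t t₂ : ℝ, 0 ≤ t₁ ∧ t₁ ≤ t ∧ t ≤ t₂ ∧ t₂ ≤ 1 ∧ t₂ - t₁ ≤ δ ∧
      v = M1Dist (x t₁) (x t) (x t₂)} := by
    refine ⟨2 * B, ?_⟩
    rintro v ⟨s₁, s, s₂, h0, h1, h2, h3, h4, rfl⟩
    have b1 := hbd s₁ h0 (by linarith)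
    have b2 := hbd s (by linarith) (by linarith)
    calc M1Dist (x s₁) (x s) (x s₂) ≤ |x s - x s₁| := M1Dist_le_abs _ _ _
    _ ≤ |x s| + |x s₁| := abs_sub _ _
    _ ≤ 2 * B := by linarith
  -- membership
  have hnR : (0 : ℝ) < n := Nat.cast_pos.mpr hn
  have hcast : ((j - 1 : ℕ) : ℝ) = (j : ℝ) - 1 := by
    rw [Nat.cast_sub hj1]; norm_num
  have hjle : (j : ℝ) + 1 ≤ n := by exact_mod_cast hjn
  have hmem : M1Dist (x t₁) (x t) (x t₂) ∈ {v : ℝ | ∃ t₁ t t₂ : ℝ, 0 ≤ t₁ ∧ t₁ ≤ t ∧ t ≤ t₂ ∧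
      t₂ ≤ 1 ∧ t₂ - t₁ ≤ δ ∧ v = M1Dist (x t₁) (x t) (x t₂)} := by
    refine ⟨t₁, t, t₂, ?_, ?_, ?_, ?_, ?_, rfl⟩
    · positivity
    · rw [ht₁, ht]
      gcongr
      omega
    · rw [ht, ht₂]
      gcongr
      omega
    · rw [ht₂, div_le_one hnR]; push_cast; linarith
    · rw [ht₂, ht₁, div_sub_div_same, hcast]
      push_cast
      calc ((j : ℝ) + 1 - ((j : ℝ) - 1)) / n = 2 / n := by ring_nf
      _ ≤ δ := hδ
  calc (1 : ℝ) < M1Dist (x t₁) (x t) (x t₂) := hMval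
  _ ≤ M1Osc x δ := le_csSup hBdd hmem

lemma slope_exp_lim : Tendsto (fun y : ℝ => (Real.exp y - 1) / y) (nhdsWithin 0 {0}ᶜ) (nhds 1) := by
  have h := (Real.hasDerivAt_exp 0)
  rw [hasDerivAt_iff_tendsto_slope] at h
  simp only [Real.exp_zero] at h
  refine h.congr' ?_
  filter_upwards [self_mem_nhdsWithin] with y hy
  simp [slope_def_field, Real.exp_zero]

lemma ratio_lim {u : ℕ → ℝ} (hu0 : ∀ n, 0 < u n) (hu : Tendsto u atTop (nhds 0)) :
    Tendsto (fun n => (1 - Real.exp (-u n)) / u n) atTop (nhds 1) := by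
  have hcomp : Tendsto (fun n => -u n) atTop (nhdsWithin 0 {0}ᶜ) := by
    rw [tendsto_nhdsWithin_iff]
    exact ⟨(by simpa using hu.neg), Filter.Eventually.of_forall fun n => by
      simp only [Set.mem_compl_iff, Set.mem_singleton_iff]
      have := hu0 n; intro h; rw [neg_eq_zero] at h; linarith⟩
  have h := slope_exp_lim.comp hcomp
  refine h.congr fun n => ?_
  simp only [Function.comp_apply]
  have hun := (hu0 n).ne'
  rw [div_neg, eq_div_iff hun]
  field_simp
  ring


/-- Let `(Z_i)_{i≥0}` be i.i.d. unit Fréchet random variables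
(`P(Z ≤ x) = exp(−1/x)` for `x > 0` and `= 0` for `x ≤ 0`) and let `(a_n)` be positive
reals with `n·P(Z_1 > a_n) → 1`. For `n ≥ 1` define `V_n : [0,1] → ℝ` by
`V_n(t) = ⋁_{j=1}^{⌊nt⌋} Z_j/a_n − ⋁_{j=1}^{⌊nt⌋} Z_{j−1}/a_n` (maximum over an empty
index set equal to `0`, realized by `Finset.fold max 0`). Then there exist `ε > 0` and
`c > 0` such that for every `δ > 0`, `limsup_{n→∞} P( ω_δ(V_n) > ε ) ≥ c`; in particular
`lim_{δ↓0} limsup_{n→∞} P( ω_δ(V_n) > ε ) > 0`. -/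
theorem exists_eps_limsup_prob_osc_pos {Ω : Type*} [MeasureSpace Ω]
    [IsProbabilityMeasure (ℙ : Measure Ω)]
    (Z : ℕ → Ω → ℝ) (hmeas : ∀ i, Measurable (Z i))
    (hindep : iIndepFun Z ℙ)
    (hcdf : ∀ i : ℕ, ∀ x : ℝ,
      ℙ {ω | Z i ω ≤ x} = if 0 < x then ENNReal.ofReal (Real.exp (-1 / x)) else 0)
    (a : ℕ → ℝ) (ha : ∀ n, 0 < a n)
    (hna : Tendsto (fun n : ℕ => (n : ℝ) * (ℙ {ω | a n < Z 1 ω}).toReal) atTop (nhds 1)) :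
    ∃ ε : ℝ, 0 < ε ∧ ∃ c : ℝ, 0 < c ∧
      ∀ δ : ℝ, 0 < δ →
        c ≤ Filter.limsup (fun n : ℕ =>
          (ℙ {ω | ε < M1Osc (fun t : ℝ =>
              ((Finset.Icc 1 ⌊(n : ℝ) * t⌋₊).fold max 0 (fun j => Z j ω / a n)) -
                ((Finset.Icc 1 ⌊(n : ℝ) * t⌋₊).fold max 0 (fun j => Z (j - 1) ω / a n))) δ
            }).toReal) atTop := by
  classical
  refine ⟨1, one_pos, 1/10, by norm_num, ?_⟩
  classical
  set u : ℕ → ℝ := fun n => 1 / a n with hu_def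
  have hu0 : ∀ n, 0 < u n := fun n => by
    have := ha n; simp only [hu_def]; positivity
  -- tail probability
  have hgt : ∀ (i : ℕ) (x : ℝ), 0 < x →
      ℙ {ω | x < Z i ω} = ENNReal.ofReal (1 - Real.exp (-1 / x)) := by
    intro i x hx
    have hms : MeasurableSet {ω | Z i ω ≤ x} := (hmeas i) measurableSet_Iic
    have hc : {ω | x < Z i ω} = {ω | Z i ω ≤ x}ᶜ := by ext ω; simp [not_le]
    rw [hc, measure_compl hms (measure_ne_top _ _), measure_univ, hcdf i x, if_pos hx,
      ← ENNReal.ofReal_one, ← ENNReal.ofReal_sub _ (Real.exp_nonneg _)]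
  -- analysis
  set p : ℕ → ℝ := fun n => (ℙ {ω | a n < Z 1 ω}).toReal with hp_def
  have hp_eq : ∀ n, p n = 1 - Real.exp (-u n) := by
    intro n
    have h1 : -1 / a n = -u n := by rw [hu_def]; ring
    have hpn : p n = (ℙ {ω | a n < Z 1 ω}).toReal := rfl
    rw [hpn, hgt 1 (a n) (ha n), h1, ENNReal.toReal_ofReal]
    have : Real.exp (-u n) ≤ 1 := Real.exp_le_one_iff.mpr (by linarith [hu0 n])
    linarith
  have hp_pos : ∀ n, 0 < p n := by
    intro n
    rw [hp_eq n]
    have : Real.exp (-u n) < 1 := Real.exp_lt_one_iff.mpr (by linarith [hu0 n])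
    linarith
  have hnp : Tendsto (fun n : ℕ => (n : ℝ) * p n) atTop (nhds 1) := hna
  have hp0 : Tendsto p atTop (nhds 0) := by
    have h := hnp.mul tendsto_one_div_atTop_nhds_zero_nat
    rw [mul_zero] at h
    refine h.congr' ?_
    filter_upwards [eventually_ge_atTop 1] with n hn
    have hn' : (n : ℝ) ≠ 0 := Nat.cast_ne_zero.mpr (by omega)
    field_simp
  have hexp1 : Tendsto (fun n => Real.exp (-u n)) atTop (nhds 1) := by
    have h : Tendsto (fun n : ℕ => 1 - p n) atTop (nhds 1) := by
      simpa using hp0.const_sub 1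
    exact h.congr fun n => by rw [hp_eq n]; ring
  have hu_lim : Tendsto u atTop (nhds 0) := by
    have hlog := ((Real.continuousAt_log one_ne_zero).tendsto.comp hexp1)
    simp only [Function.comp_def, Real.log_exp, Real.log_one] at hlog
    simpa using hlog.neg
  have hr : Tendsto (fun n => p n / u n) atTop (nhds 1) :=
    (ratio_lim hu0 hu_lim).congr fun n => by rw [hp_eq n]
  have hnu : Tendsto (fun n : ℕ => (n : ℝ) * u n) atTop (nhds 1) := by
    have hinv : Tendsto (fun n => u n / p n) atTop (nhds 1) := by
      have := hr.inv₀ one_ne_zero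
      rw [inv_one] at this
      exact this.congr fun n => by rw [inv_div]
    have h := hnp.mul hinv
    rw [mul_one] at h
    refine h.congr fun n => ?_
    have := (hp_pos n).ne'
    field_simp
  set q : ℕ → ℝ := fun n => 1 - Real.exp (-(u n / 5)) with hq_def
  have hq_ratio : Tendsto (fun n => q n / (u n / 5)) atTop (nhds 1) := by
    have := ratio_lim (u := fun n => u n / 5) (fun n => by linarith [hu0 n])
      (by simpa using hu_lim.div_const 5)
    exact this.congr fun n => rfl
  have hnq : Tendsto (fun n : ℕ => (n : ℝ) * q n) atTop (nhds (1 / 5)) := by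
    have h := (hnu.div_const 5).mul hq_ratio
    rw [mul_one] at h
    refine h.congr fun n => ?_
    have := (hu0 n).ne'
    field_simp
  have hq0 : Tendsto q atTop (nhds 0) := by
    have h := hq_ratio.mul (hu_lim.div_const 5)
    rw [one_mul, zero_div] at h
    refine h.congr fun n => ?_
    have := (hu0 n).ne'
    field_simp
  have hF : Tendsto (fun n : ℕ => Real.exp (-(u n / 2)) ^ n) atTop
      (nhds (Real.exp (-(1 / 2)))) := by
    have harg : Tendsto (fun n : ℕ => (n : ℝ) * (-(u n / 2))) atTop (nhds (-(1 / 2))) := by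
      have h := (hnu.neg).div_const 2
      rw [show (-1 : ℝ) / 2 = -(1 / 2) by norm_num] at h
      exact h.congr fun n => by ring
    exact ((Real.continuous_exp.tendsto _).comp harg).congr fun n => Real.exp_nat_mul _ n
  have hL : Tendsto (fun n : ℕ => ((n : ℝ) - 1) * (q n * Real.exp (-(u n / 2)) ^ n)) atTop
      (nhds ((1 / 5) * Real.exp (-(1 / 2)))) := by
    have h1 : Tendsto (fun n : ℕ => (n : ℝ) * q n - q n) atTop (nhds (1 / 5)) := by
      have := hnq.sub hq0
      rwa [sub_zero] at this
    have h := h1.mul hF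
    exact h.congr fun n => by ring
  have hl_gt : 1 / 10 < 1 / 5 * Real.exp (-(1 / 2)) := by
    have hmul : Real.exp (1/2 : ℝ) * Real.exp (1/2 : ℝ) = Real.exp 1 := by
      rw [← Real.exp_add]; norm_num
    have h2 : Real.exp (1/2 : ℝ) < 2 := by
      nlinarith [Real.exp_pos (1/2 : ℝ), Real.exp_one_lt_d9]
    have h3 : Real.exp (-(1/2) : ℝ) = (Real.exp (1/2 : ℝ))⁻¹ := by
      rw [← Real.exp_neg]
    rw [h3]
    have h4 : (2:ℝ)⁻¹ < (Real.exp (1/2 : ℝ))⁻¹ :=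
      (inv_strictAnti₀ (by positivity) h2)
    linarith
  -- the events
  set T : ℕ → ℕ → Set Ω := fun n j => ⋂ i ∈ Finset.range (n + 1),
    Z i ⁻¹' (if i = j then Set.Ioi (5 * a n) else Set.Iic (2 * a n)) with hT_def
  have hT_meas : ∀ n j, MeasurableSet (T n j) := by
    intro n j
    refine Set.Finite.measurableSet_biInter (Finset.finite_toSet _) fun i _ => ?_
    exact (hmeas i) (by split <;> [exact measurableSet_Ioi; exact measurableSet_Iic])
  have hT_measure : ∀ n j, j ∈ Finset.range (n + 1) →
      ℙ (T n j) = ENNReal.ofReal (q n) * ENNReal.ofReal (Real.exp (-(u n / 2))) ^ n := by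
    intro n j hj
    have han := (ha n).ne'
    rw [hT_def]
    rw [hindep.measure_inter_preimage_eq_mul (Finset.range (n + 1))
      (fun i _ => by split <;> [exact measurableSet_Ioi; exact measurableSet_Iic])]
    rw [← Finset.mul_prod_erase _ _ hj, if_pos rfl]
    have hterm : ∀ i ∈ (Finset.range (n + 1)).erase j,
        ℙ (Z i ⁻¹' (if i = j then Set.Ioi (5 * a n) else Set.Iic (2 * a n))) =
          ENNReal.ofReal (Real.exp (-(u n / 2))) := by
      intro i hi
      rw [if_neg (Finset.ne_of_mem_erase hi)]
      have he : Z i ⁻¹' Set.Iic (2 * a n) = {ω | Z i ω ≤ 2 * a n} := rfl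
      rw [he, hcdf i _, if_pos (by have := ha n; linarith)]
      congr 2
      rw [hu_def]
      field_simp
    rw [Finset.prod_congr rfl hterm, Finset.prod_const, Finset.card_erase_of_mem hj,
      Finset.card_range]
    congr 2
    · have he : Z j ⁻¹' Set.Ioi (5 * a n) = {ω | 5 * a n < Z j ω} := rfl
      rw [he, hgt j _ (by have := ha n; linarith), hq_def]
      congr 2
      rw [hu_def]
      field_simp
  set E : ℕ → Set Ω := fun n => ⋃ j ∈ Finset.Icc 1 (n - 1), T n j with hE_def
  have hE_measure : ∀ n, ℙ (E n) = (n - 1 : ℕ) *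
      (ENNReal.ofReal (q n) * ENNReal.ofReal (Real.exp (-(u n / 2))) ^ n) := by
    intro n
    have hdisj : Set.PairwiseDisjoint ↑(Finset.Icc 1 (n - 1)) (T n) := by
      intro j hj j' hj' hne
      rw [Finset.coe_Icc, Set.mem_Icc] at hj hj'
      refine Set.disjoint_left.mpr fun ω hωj hωj' => ?_
      rw [hT_def] at hωj hωj'
      simp only [Set.mem_iInter] at hωj hωj'
      have h1 := hωj j (by simp [Finset.mem_range]; omega)
      have h2 := hωj' j (by simp [Finset.mem_range]; omega)
      rw [if_pos rfl] at h1
      rw [if_neg hne] at h2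
      simp only [Set.mem_preimage, Set.mem_Ioi, Set.mem_Iic] at h1 h2
      have := ha n
      linarith
    rw [hE_def]
    rw [measure_biUnion_finset hdisj fun j _ => hT_meas n j]
    rw [Finset.sum_congr rfl fun j hj => hT_measure n j
      (by simp only [Finset.mem_Icc] at hj; simp [Finset.mem_range]; omega)]
    rw [Finset.sum_const, Nat.card_Icc]
    simp [nsmul_eq_mul]
  have hP_real : ∀ n, 1 ≤ n → (ℙ (E n)).toReal =
      ((n : ℝ) - 1) * (q n * Real.exp (-(u n / 2)) ^ n) := by
    intro n hn
    rw [hE_measure n, ENNReal.toReal_mul, ENNReal.toReal_mul, ENNReal.toReal_pow,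
      ENNReal.toReal_natCast, ENNReal.toReal_ofReal, ENNReal.toReal_ofReal (Real.exp_nonneg _)]
    · rw [Nat.cast_sub hn]; norm_num
    · rw [hq_def]
      have : Real.exp (-(u n / 5)) ≤ 1 := Real.exp_le_one_iff.mpr (by linarith [hu0 n])
      linarith
  intro δ hδ
  have hsubset : ∀ n : ℕ, 2 / (n : ℝ) ≤ δ → E n ⊆ {ω | 1 < M1Osc (fun t : ℝ =>
      ((Finset.Icc 1 ⌊(n : ℝ) * t⌋₊).fold max 0 (fun j => Z j ω / a n)) -
        ((Finset.Icc 1 ⌊(n : ℝ) * t⌋₊).fold max 0 (fun j => Z (j - 1) ω / a n))) δ} := by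
    intro n hn ω hω
    rw [hE_def] at hω
    simp only [Set.mem_iUnion, Finset.mem_Icc, exists_prop] at hω
    obtain ⟨j, hj, hωT⟩ := hω
    rw [hT_def] at hωT
    simp only [Set.mem_iInter, Set.mem_preimage] at hωT
    have hjn : j + 1 ≤ n := by omega
    have hbig : 5 * a n < Z j ω := by
      have := hωT j (Finset.mem_range.mpr (by omega))
      rwa [if_pos rfl, Set.mem_Ioi] at this
    have hsmall : ∀ i, i ≤ n → i ≠ j → Z i ω ≤ 2 * a n := by
      intro i hi hij
      have := hωT i (Finset.mem_range.mpr (by omega))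
      rwa [if_neg hij, Set.mem_Iic] at this
    exact osc_lower hj.1 hjn (ha n) hbig hsmall hn
  have hEv : ∀ᶠ n : ℕ in atTop, 1 / 10 ≤ (ℙ {ω | 1 < M1Osc (fun t : ℝ =>
      ((Finset.Icc 1 ⌊(n : ℝ) * t⌋₊).fold max 0 (fun j => Z j ω / a n)) -
        ((Finset.Icc 1 ⌊(n : ℝ) * t⌋₊).fold max 0 (fun j => Z (j - 1) ω / a n))) δ}).toReal := by
    have h1 : ∀ᶠ n : ℕ in atTop, 1 / 10 < ((n : ℝ) - 1) * (q n * Real.exp (-(u n / 2)) ^ n) :=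
      hL.eventually (eventually_gt_nhds hl_gt)
    have h2 : ∀ᶠ n : ℕ in atTop, 2 / (n : ℝ) ≤ δ := by
      have ht := tendsto_const_div_atTop_nhds_zero_nat (2 : ℝ)
      exact ht.eventually (eventually_le_nhds hδ)
    filter_upwards [h1, h2, eventually_ge_atTop 1] with n hn1 hn2 hn3
    have hle := measure_mono (μ := (ℙ : Measure Ω)) (hsubset n hn2)
    have hle' := ENNReal.toReal_mono (measure_ne_top _ _) hle
    rw [hP_real n hn3] at hle'
    linarith
  refine Filter.le_limsup_of_frequently_le hEv.frequently ?_
  refine isBoundedUnder_of ⟨1, fun n => ?_⟩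
  exact le_trans (ENNReal.toReal_mono ENNReal.one_ne_top prob_le_one)
    (le_of_eq ENNReal.toReal_one)
end
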